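/- arXiv:1508.01923 — 3 statements merged into one kernel-verified Lean document; each statement's English description precedes it below -/
import Mathlib

section
/- For all i, i' ∈ Fin d, j, j' ∈ ℕ and m, n ∈ ℤ, the endomorphisms a_{i,j}(m) and a_{i',j'}(n) of R satisfy the commutation relation a_{i,j}(m) ∘ a_{i',j'}(n) − a_{i',j'}(n) ∘ a_{i,j}(m) = m·l·δ_{m+n,0}·δ_{(i,j),(i',j')}·id_R. (Thus the assignment (u^{(i)}t^j)⊗s^k ↦ a_{i,j}(k), 𝐤 ↦ l·id_R makes the polynomial ring R a level-l representation of the affinization of the current algebra of a d-dimensional abelian Lie algebra.) -/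
open MvPolynomial

lemma pderiv_comm' {σ R : Type*} [CommSemiring R] [DecidableEq σ] (s t : σ)
    (p : MvPolynomial σ R) : pderiv s (pderiv t p) = pderiv t (pderiv s p) := by
  induction p using MvPolynomial.induction_on with
  | C a => simp
  | add p q hp hq => simp [hp, hq]
  | mul_X p u hp =>
    simp only [pderiv_mul, map_add, pderiv_mul, hp, pderiv_X, Pi.single_apply,
      apply_ite (pderiv s), apply_ite (pderiv t), pderiv_one, map_zero]
    simp [add_right_comm]

lemma comm_key {σ : Type*} [DecidableEq σ] (s t : σ) (p : MvPolynomial σ ℂ) :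
    pderiv s (X t * p) - X t * pderiv s p = if s = t then p else 0 := by
  rw [pderiv_mul, pderiv_X]
  rcases eq_or_ne s t with h | h <;> simp [h, Pi.single_apply]

lemma end_pderiv_comm {σ : Type*} [DecidableEq σ] (s t : σ) :
    (pderiv (R := ℂ) s).toLinearMap * (pderiv (R := ℂ) t).toLinearMap
      = ((pderiv t).toLinearMap * (pderiv s).toLinearMap :
          Module.End ℂ (MvPolynomial σ ℂ)) := by
  apply LinearMap.ext; intro p
  simpa [Module.End.mul_apply] using pderiv_comm' s t p

lemma end_mulLeft_comm {σ : Type*} (a b : MvPolynomial σ ℂ) :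
    LinearMap.mulLeft ℂ a * LinearMap.mulLeft ℂ b
      = LinearMap.mulLeft ℂ b * LinearMap.mulLeft ℂ a := by
  apply LinearMap.ext; intro p
  simp [Module.End.mul_apply, mul_left_comm]

lemma scaled_key {σ : Type*} [DecidableEq σ] (r : ℂ) (s t : σ) :
    r • (pderiv (R := ℂ) s).toLinearMap * LinearMap.mulLeft ℂ (X t)
      - LinearMap.mulLeft ℂ (X t) * (r • (pderiv s).toLinearMap)
      = if s = t then r • (1 : Module.End ℂ (MvPolynomial σ ℂ)) else 0 := by
  apply LinearMap.ext; intro p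
  have h := comm_key s t p
  rcases eq_or_ne s t with h' | h'
  · subst h'
    simp only [eq_self_iff_true, if_true, LinearMap.sub_apply, Module.End.mul_apply,
      LinearMap.smul_apply, LinearMap.mulLeft_apply, Module.End.one_apply,
      Derivation.coeFn_coe, smul_eq_C_mul] at h ⊢
    linear_combination (C r : MvPolynomial σ ℂ) * h
  · simp only [if_neg h', LinearMap.sub_apply, Module.End.mul_apply,
      LinearMap.smul_apply, LinearMap.mulLeft_apply, LinearMap.zero_apply,
      Derivation.coeFn_coe, smul_eq_C_mul] at h ⊢
    linear_combination (C r : MvPolynomial σ ℂ) * h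

lemma scaled_key' {σ : Type*} [DecidableEq σ] (r : ℂ) (s t : σ) :
    LinearMap.mulLeft ℂ (X t) * (r • (pderiv (R := ℂ) s).toLinearMap)
      - r • (pderiv s).toLinearMap * LinearMap.mulLeft ℂ (X t)
      = if s = t then (-r) • (1 : Module.End ℂ (MvPolynomial σ ℂ)) else 0 := by
  have h := scaled_key r s t
  rcases eq_or_ne s t with h' | h'
  · simp only [if_pos h'] at h ⊢
    rw [← neg_sub, h]
    exact (neg_smul r _).symm
  · simp only [if_neg h'] at h ⊢
    rw [← neg_sub, h, neg_zero]

/-- The operators `a_{i,j}(k)` of the polynomial realization `P(l,λ)` of the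
`ĥ[t]`-module `W(λ,c,l)`: `a_{i,j}(k) = k·l·∂_{i,j,k}` for `k > 0`,
`a_{i,j}(0) = c^j·λ(i)·id`, and `a_{i,j}(k) = X_{i,j,-k}` (multiplication) for `k < 0`. -/
noncomputable def aOp (d : ℕ) (l : ℂ) (lam : Fin d → ℂ) (c : ℂ)
    (i : Fin d) (j : ℕ) (k : ℤ) :
    Module.End ℂ (MvPolynomial (Fin d × ℕ × ℕ+) ℂ) :=
  if hk : 0 < k then
    ((k : ℂ) * l) • (pderiv (i, j, (⟨k.toNat, by omega⟩ : ℕ+))).toLinearMap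
  else if hk0 : k = 0 then
    (c ^ j * lam i) • (1 : Module.End ℂ (MvPolynomial (Fin d × ℕ × ℕ+) ℂ))
  else
    LinearMap.mulLeft ℂ (X (i, j, (⟨(-k).toNat, by omega⟩ : ℕ+)))

/-- the operators `a_{i,j}(k)` satisfy the commutation relations of the
affinization of the current algebra of a `d`-dimensional abelian Lie algebra, at level `l`:
`[a_{i,j}(m), a_{i',j'}(n)] = m·l·δ_{m+n,0}·δ_{(i,j),(i',j')}·id`. -/
theorem statement0 (d : ℕ) (hd : 0 < d) (l : ℂ) (hl : l ≠ 0)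
    (lam : Fin d → ℂ) (c : ℂ)
    (i i' : Fin d) (j j' : ℕ) (m n : ℤ) :
    aOp d l lam c i j m * aOp d l lam c i' j' n
      - aOp d l lam c i' j' n * aOp d l lam c i j m
      = ((m : ℂ) * l * (if m + n = 0 then 1 else 0)
          * (if (i, j) = (i', j') then 1 else 0))
        • (1 : Module.End ℂ (MvPolynomial (Fin d × ℕ × ℕ+) ℂ)) := by
  rcases lt_trichotomy 0 m with hm | hm | hm
  · rcases lt_trichotomy 0 n with hn | hn | hn
    · -- m > 0, n > 0
      rw [aOp, dif_pos hm, aOp, dif_pos hn, if_neg (by omega : ¬ m + n = 0)]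
      simp only [smul_mul_assoc, mul_smul_comm, mul_zero, zero_mul, zero_smul]
      have hc : ∀ (r s : ℂ) (A B : Module.End ℂ (MvPolynomial (Fin d × ℕ × ℕ+) ℂ)),
          A * B = B * A → r • A * s • B - s • B * r • A = 0 := by
        intro r s A B h
        rw [smul_mul_smul_comm, smul_mul_smul_comm, h, mul_comm r s, sub_self]
      exact hc _ _ _ _ (end_pderiv_comm _ _)
    · -- m > 0, n = 0
      rw [aOp, dif_pos hm, aOp, dif_neg (by omega), dif_pos hn.symm,
        if_neg (by omega : ¬ m + n = 0)]
      simp only [smul_mul_assoc, mul_smul_comm, mul_one, one_mul, mul_zero,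
        zero_mul, zero_smul]
      exact sub_self _
    · -- m > 0, n < 0
      rw [aOp, dif_pos hm, aOp, dif_neg (by omega), dif_neg (by omega)]
      erw [scaled_key]
      have key : ((i, j, (⟨m.toNat, by omega⟩ : ℕ+))
            = (i', j', (⟨(-n).toNat, by omega⟩ : ℕ+)))
          ↔ ((i, j) = (i', j') ∧ m + n = 0) := by
        simp only [Prod.mk.injEq, Subtype.mk.injEq]
        constructor
        · rintro ⟨h1, h2, h3⟩; exact ⟨by simp [h1, h2], by omega⟩
        · rintro ⟨⟨ha, hb⟩, h2⟩
          exact ⟨ha, hb, by omega⟩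
      by_cases hc : (i, j) = (i', j') ∧ m + n = 0
      · erw [if_pos (key.mpr hc), if_pos hc.2, if_pos hc.1]
        simp
        rfl
      · erw [if_neg (fun h => hc (key.mp h))]
        rcases not_and_or.mp hc with h | h <;> simp [h] <;> rfl
  · -- m = 0
    subst hm
    rw [aOp, dif_neg (by omega), dif_pos rfl]
    simp only [Int.cast_zero, zero_mul, zero_smul]
    rw [smul_mul_assoc, mul_smul_comm, one_mul, mul_one, sub_self]
  · -- m < 0
    rcases lt_trichotomy 0 n with hn | hn | hn
    · -- m < 0, n > 0
      rw [aOp, dif_neg (by omega), dif_neg (by omega), aOp, dif_pos hn]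
      erw [scaled_key']
      have key : ((i', j', (⟨n.toNat, by omega⟩ : ℕ+))
            = (i, j, (⟨(-m).toNat, by omega⟩ : ℕ+)))
          ↔ ((i, j) = (i', j') ∧ m + n = 0) := by
        simp only [Prod.mk.injEq, Subtype.mk.injEq]
        constructor
        · rintro ⟨h1, h2, h3⟩; exact ⟨by simp [h1, h2], by omega⟩
        · rintro ⟨⟨ha, hb⟩, h2⟩
          exact ⟨ha.symm, hb.symm, by omega⟩
      by_cases hc : (i, j) = (i', j') ∧ m + n = 0
      · erw [if_pos (key.mpr hc), if_pos hc.2, if_pos hc.1]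
        have hmn : (m : ℂ) = -(n : ℂ) := by
          have : m = -n := by omega
          simp [this]
        rw [hmn]
        congr 1
        ring
      · erw [if_neg (fun h => hc (key.mp h))]
        rcases not_and_or.mp hc with h | h <;> simp [h]
    · -- m < 0, n = 0
      rw [aOp, dif_neg (by omega), dif_neg (by omega), aOp,
        dif_neg (by omega), dif_pos hn.symm, if_neg (by omega : ¬ m + n = 0)]
      simp only [mul_smul_comm, smul_mul_assoc, one_mul, mul_one, sub_self,
        mul_zero, zero_mul, zero_smul]
    · -- m < 0, n < 0
      rw [aOp, dif_neg (by omega), dif_neg (by omega), aOp,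
        dif_neg (by omega), dif_neg (by omega), if_neg (by omega : ¬ m + n = 0)]
      rw [end_mulLeft_comm, sub_self]
      simp
end

section
/- Let σ be any type and let U be a ℂ-linear subspace of MvPolynomial σ ℂ such that for every v ∈ σ and every p ∈ U one has (X v)·p ∈ U and pderiv v p ∈ U. If U ≠ {0} then U = MvPolynomial σ ℂ. (This is the irreducibility of the polynomial module P(l,λ) in Proposition 4.1: the operators a_{i,j}(k) for k ≠ 0 are nonzero scalar multiples of the multiplications X v and derivatives pderiv v, and the operators a_{i,j}(0) act by scalars.) -/
open MvPolynomial Finsupp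

lemma coeff_pderiv' {σ : Type*} (v : σ) (m : σ →₀ ℕ) (p : MvPolynomial σ ℂ) :
    coeff m (pderiv v p) = coeff (m + Finsupp.single v 1) p * (m v + 1) := by
  classical
  induction p using MvPolynomial.induction_on' with
  | monomial s a =>
    rw [pderiv_monomial, coeff_monomial, coeff_monomial]
    by_cases hsv : s v = 0
    · have h1 : s ≠ m + Finsupp.single v 1 := by
        intro h; apply absurd hsv; rw [h]; simp
      rw [if_neg h1]
      simp [hsv]
    · by_cases h : s = m + Finsupp.single v 1
      · subst h
        have h2 : m + Finsupp.single v 1 - Finsupp.single v 1 = m := by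
          ext w; by_cases hw : w = v <;> simp [hw]
        rw [if_pos h2]
        simp only [Finsupp.add_apply, Finsupp.single_eq_same]
        push_cast; ring
      · have h2 : s - Finsupp.single v 1 ≠ m := by
          intro h3
          apply h
          ext w
          by_cases hw : w = v
          · subst hw
            have := congrArg (fun f => f w) h3
            simp only [Finsupp.tsub_apply, Finsupp.add_apply, Finsupp.single_eq_same] at this ⊢
            omega
          · have := congrArg (fun f => f w) h3
            simp only [Finsupp.tsub_apply, Finsupp.add_apply,
              Finsupp.single_apply, if_neg (Ne.symm hw)] at this ⊢
            omega
        rw [if_neg h2, if_neg h, zero_mul]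
  | add p q hp hq => simp [hp, hq, add_mul]

lemma pderiv_totalDegree_lt' {σ : Type*} (v : σ) (p : MvPolynomial σ ℂ)
    (hp : 0 < p.totalDegree) : (pderiv v p).totalDegree < p.totalDegree := by
  rw [totalDegree, Finset.sup_lt_iff (by simpa using hp)]
  intro m hm
  rw [MvPolynomial.mem_support_iff, coeff_pderiv'] at hm
  have h1 : coeff (m + Finsupp.single v 1) p ≠ 0 := fun h => hm (by simp [h])
  have h2 := le_totalDegree (p := p) (MvPolynomial.mem_support_iff.mpr h1)
  have h3 : (m + Finsupp.single v 1).sum (fun _ e => e) =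
      m.sum (fun _ e => e) + 1 := by
    rw [Finsupp.sum_add_index' (fun _ => rfl) (fun _ _ _ => rfl),
      Finsupp.sum_single_index rfl]
  omega

lemma one_mem_of_ne_zero {σ : Type*} (U : Submodule ℂ (MvPolynomial σ ℂ))
    (hD : ∀ v : σ, ∀ p ∈ U, MvPolynomial.pderiv v p ∈ U) :
    ∀ n : ℕ, ∀ p : MvPolynomial σ ℂ, p.totalDegree ≤ n → p ∈ U → p ≠ 0 →
      (1 : MvPolynomial σ ℂ) ∈ U := by
  intro n
  induction n with
  | zero =>
    intro p hdeg hpU hp0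
    classical
    have h0 : p.totalDegree = 0 := Nat.le_zero.mp hdeg
    have hC : p = C (coeff 0 p) := by
      ext m
      rw [coeff_C]
      by_cases hm : m = 0
      · simp [hm]
      · rw [if_neg (fun h => hm h.symm)]
        by_contra hc
        exact hm (Finsupp.ext ((totalDegree_eq_zero_iff σ p).mp h0 m
          (MvPolynomial.mem_support_iff.mpr hc)))
    obtain ⟨c, rfl⟩ : ∃ c, p = C c := ⟨_, hC⟩
    have hc0 : c ≠ 0 := fun h => hp0 (by rw [h, map_zero])
    have : c⁻¹ • (C c : MvPolynomial σ ℂ) = 1 := by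
      rw [smul_eq_C_mul, ← C_mul, inv_mul_cancel₀ hc0, C_1]
    exact this ▸ U.smul_mem _ hpU
  | succ n ih =>
    intro p hdeg hpU hp0
    by_cases h0 : p.totalDegree = 0
    · exact ih p (by omega) hpU hp0
    · -- find a variable occurring in p
      have : ∃ m ∈ p.support, ∃ x, m x ≠ 0 := by
        by_contra hcon
        push_neg at hcon
        exact h0 ((totalDegree_eq_zero_iff σ p).mpr hcon)
      obtain ⟨m, hm, v, hv⟩ := this
      have hne : pderiv v p ≠ 0 := by
        intro hz
        have key : coeff (m - Finsupp.single v 1) (pderiv v p) ≠ 0 := by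
          rw [coeff_pderiv']
          have he : m - Finsupp.single v 1 + Finsupp.single v 1 = m := by
            ext w
            by_cases hw : w = v
            · subst hw
              simp only [Finsupp.add_apply, Finsupp.tsub_apply, Finsupp.single_eq_same]
              omega
            · simp [Finsupp.single_apply, Ne.symm hw, hw]
          rw [he]
          exact mul_ne_zero (MvPolynomial.mem_support_iff.mp hm) (Nat.cast_add_one_ne_zero _)
        exact key (by rw [hz]; simp)
      have hlt := pderiv_totalDegree_lt' v p (Nat.pos_of_ne_zero h0)
      exact ih (pderiv v p) (by omega) (hD v p hpU) hne



/-- a nonzero `ℂ`-subspace of a multivariate polynomial ring that is stable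
under multiplication by every variable and under every formal partial derivative is the
whole ring (irreducibility of the polynomial module `P(l,λ)`, Proposition 4.1). -/
theorem statement1 (σ : Type*) (U : Submodule ℂ (MvPolynomial σ ℂ))
    (hX : ∀ v : σ, ∀ p ∈ U, MvPolynomial.X v * p ∈ U)
    (hD : ∀ v : σ, ∀ p ∈ U, MvPolynomial.pderiv v p ∈ U)
    (hne : U ≠ ⊥) : U = ⊤ := by
  obtain ⟨p, hpU, hp0⟩ := Submodule.exists_mem_ne_zero_of_ne_bot hne
  have h1 : (1 : MvPolynomial σ ℂ) ∈ U :=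
    one_mem_of_ne_zero U hD p.totalDegree p le_rfl hpU hp0
  -- every monomial with coefficient one is in U
  have hmon : ∀ s : σ →₀ ℕ, (monomial s 1 : MvPolynomial σ ℂ) ∈ U := by
    intro s
    induction s using Finsupp.induction with
    | zero => simpa using h1
    | single_add v n f hvf hn ihf =>
      have hpow : ∀ k : ℕ, (X v : MvPolynomial σ ℂ) ^ k * monomial f 1 ∈ U := by
        intro k
        induction k with
        | zero => simpa using ihf
        | succ k ihk =>
          rw [pow_succ, mul_comm ((X v : MvPolynomial σ ℂ) ^ k) (X v), mul_assoc]
          exact hX v _ ihk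
      have : (monomial (Finsupp.single v n + f) 1 : MvPolynomial σ ℂ) =
          X v ^ n * monomial f 1 := by
        rw [X_pow_eq_monomial, monomial_mul, one_mul]
      rw [this]
      exact hpow n
  rw [eq_top_iff]
  intro q _
  induction q using MvPolynomial.induction_on' with
  | monomial s a =>
    have : (monomial s a : MvPolynomial σ ℂ) = a • monomial s 1 := by
      rw [smul_monomial, smul_eq_mul, mul_one]
    exact this ▸ U.smul_mem a (hmon s)
  | add p q hp hq => exact U.add_mem (hp trivial) (hq trivial)
end

section
/- Let W be a complex vector space equipped with: endomorphisms A(i,j,k) ∈ End_ℂ(W) for i ∈ Fin d, j ∈ ℕ, k ∈ ℤ, and a family of subspaces (W_n)_{n∈ℤ} forming an internal direct sum decomposition W = ⊕_{n∈ℤ} W_n, such that (i) A(i,j,k)(W_m) ⊆ W_{m−k} for all m, k ∈ ℤ; (ii) A(i,j,m) ∘ A(i',j',n) − A(i',j',n) ∘ A(i,j,m) = m·l·δ_{m+n,0}·δ_{(i,j),(i',j')}·id_W for all indices; (iii) for every w ∈ W and every k > 0, A(i,j,k)w = 0 for all but finitely many j ∈ ℕ; (iv) there exists N ∈ ℤ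 with W_n = 0 for all n < N. Let Ω(W) := {w ∈ W : A(i,j,k)w = 0 for all i ∈ Fin d, j ∈ ℕ and all integers k > 0}. Then the ℂ-linear map Φ : MvPolynomial (Fin d × ℕ × ℕ+) ℂ ⊗_ℂ Ω(W) → W determined on monomials by Φ(X^e ⊗ w) = (∏_{(i,j,n) ∈ supp(e)} A(i,j,−n)^{e(i,j,n)}) w — the product taken in any order, the operators A(i,j,−n) pairwise commuting by (ii) — is a linear isomorphism. In particular every restricted ℤ-graded level-l module W for the affinization of the abelian current algebra satisfies W ≅ M(l) ⊗ Ω(W) (Theorem 4.2). -/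
open MvPolynomial TensorProduct

namespace St4

variable {d : ℕ} {l : ℂ} {W : Type*} [AddCommGroup W] [Module ℂ W]

/-- creation operator -/
def B (A : Fin d → ℕ → ℤ → Module.End ℂ W) (v : Fin d × ℕ × ℕ+) : Module.End ℂ W :=
  A v.1 v.2.1 (-((v.2.2 : ℕ) : ℤ))

/-- annihilation operator -/
def C (A : Fin d → ℕ → ℤ → Module.End ℂ W) (v : Fin d × ℕ × ℕ+) : Module.End ℂ W :=
  A v.1 v.2.1 ((v.2.2 : ℕ) : ℤ)

section comm

variable {A : Fin d → ℕ → ℤ → Module.End ℂ W}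
  (hbr : ∀ (i : Fin d) (j : ℕ) (m : ℤ) (i' : Fin d) (j' : ℕ) (n : ℤ),
      A i j m * A i' j' n - A i' j' n * A i j m
        = ((m : ℂ) * l * (if m + n = 0 then 1 else 0)
            * (if (i, j) = (i', j') then 1 else 0)) • 1)

include hbr

theorem comm_of_ne_zero {i : Fin d} {j : ℕ} {m : ℤ} {i' : Fin d} {j' : ℕ} {n : ℤ}
    (h : m + n ≠ 0) : Commute (A i j m) (A i' j' n) := by
  have h1 := hbr i j m i' j' n
  rw [if_neg h] at h1
  simp only [mul_zero, zero_mul, zero_smul] at h1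
  exact sub_eq_zero.mp h1

theorem comm_BB (v u : Fin d × ℕ × ℕ+) : Commute (B A v) (B A u) := by
  refine comm_of_ne_zero hbr ?_
  have := v.2.2.pos; have := u.2.2.pos
  omega

theorem comm_CC (v u : Fin d × ℕ × ℕ+) : Commute (C A v) (C A u) := by
  refine comm_of_ne_zero hbr ?_
  have := v.2.2.pos; have := u.2.2.pos
  omega

theorem comm_CB_ne {v u : Fin d × ℕ × ℕ+} (h : v ≠ u) : Commute (C A v) (B A u) := by
  rcases eq_or_ne ((v.2.2 : ℕ) : ℤ) ((u.2.2 : ℕ) : ℤ) with heq | hne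
  · have h1 := hbr v.1 v.2.1 ((v.2.2 : ℕ) : ℤ) u.1 u.2.1 (-((u.2.2 : ℕ) : ℤ))
    have hij : (v.1, v.2.1) ≠ (u.1, u.2.1) := by
      intro hc
      apply h
      have hnn : v.2.2 = u.2.2 := PNat.coe_injective (by exact_mod_cast heq)
      obtain ⟨i, j, n⟩ := v
      obtain ⟨i', j', n'⟩ := u
      simp_all
    rw [if_neg hij] at h1
    simp only [mul_zero, zero_smul] at h1
    exact sub_eq_zero.mp h1
  · exact comm_of_ne_zero hbr (by omega)

theorem CB_self (v : Fin d × ℕ × ℕ+) :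
    C A v * B A v = B A v * C A v + (((v.2.2 : ℕ) : ℂ) * l) • 1 := by
  have h1 := hbr v.1 v.2.1 ((v.2.2 : ℕ) : ℤ) v.1 v.2.1 (-((v.2.2 : ℕ) : ℤ))
  rw [if_pos (by ring), if_pos rfl] at h1
  have : C A v * B A v - B A v * C A v = (((v.2.2 : ℕ) : ℂ) * l) • 1 := by
    simpa [C, B] using h1
  linear_combination (norm := module) this

theorem pairwiseB (e : (Fin d × ℕ × ℕ+) →₀ ℕ) (s : Finset (Fin d × ℕ × ℕ+)) :
    (s : Set (Fin d × ℕ × ℕ+)).Pairwise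
      (Function.onFun Commute (fun v => B A v ^ e v)) :=
  fun x _ y _ _ => (comm_BB hbr x y).pow_pow _ _

omit hbr in
theorem sub_single_add {e : (Fin d × ℕ × ℕ+) →₀ ℕ} {v : Fin d × ℕ × ℕ+}
    (h : 1 ≤ e v) : e - Finsupp.single v 1 + Finsupp.single v 1 = e := by
  ext u
  by_cases huv : u = v
  · subst huv
    simp only [Finsupp.add_apply, Finsupp.tsub_apply, Finsupp.single_eq_same]
    omega
  · simp [Finsupp.single_apply, Ne.symm huv]

/-- the commutative monoid of creation operators -/
def Mcl (A : Fin d → ℕ → ℤ → Module.End ℂ W) : Submonoid (Module.End ℂ W) :=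
  Submonoid.closure (Set.range fun v : Fin d × ℕ × ℕ+ => B A v)

theorem comm_range : ∀ a ∈ Set.range (fun v : Fin d × ℕ × ℕ+ => B A v),
    ∀ b ∈ Set.range (fun v : Fin d × ℕ × ℕ+ => B A v), a * b = b * a := by
  rintro a ⟨v, rfl⟩ b ⟨u, rfl⟩
  exact (comm_BB hbr v u).eq

noncomputable def McommMonoid : CommMonoid (Mcl A) :=
  Submonoid.closureCommMonoidOfComm (Module.End ℂ W) (comm_range hbr)

omit hbr in
theorem B_mem_Mcl (v : Fin d × ℕ × ℕ+) : B A v ∈ Mcl A :=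
  Submonoid.subset_closure (Set.mem_range_self v)

/-- creation operator as element of `Mcl` -/
noncomputable def Bm (v : Fin d × ℕ × ℕ+) : Mcl A := ⟨B A v, B_mem_Mcl v⟩

/-- product of creation operators -/
noncomputable def P (e : (Fin d × ℕ × ℕ+) →₀ ℕ) : Module.End ℂ W :=
  letI := McommMonoid hbr
  (↑(∏ v ∈ e.support, (Bm v : Mcl A) ^ e v) : Module.End ℂ W)

theorem P_eq_noncommProd (e : (Fin d × ℕ × ℕ+) →₀ ℕ) :
    P hbr e = e.support.noncommProd (fun v => B A v ^ e v) (pairwiseB hbr e _) := by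
  letI := McommMonoid hbr
  rw [P, ← Finset.noncommProd_eq_prod _ _]
  exact (Finset.map_noncommProd _ _ _ (Mcl A).subtype).trans
    (Finset.noncommProd_congr rfl (fun u _ => by simp [Bm]) _)

theorem P_ext (e : (Fin d × ℕ × ℕ+) →₀ ℕ) (s : Finset (Fin d × ℕ × ℕ+))
    (hs : e.support ⊆ s) :
    letI := McommMonoid hbr
    (∏ v ∈ e.support, (Bm v : Mcl A) ^ e v) = ∏ v ∈ s, (Bm v : Mcl A) ^ e v := by
  letI := McommMonoid hbr
  refine Finset.prod_subset hs (fun x _ hnx => ?_)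
  rw [Finsupp.notMem_support_iff.mp hnx, pow_zero]
  rfl

theorem P_zero : P hbr (0 : (Fin d × ℕ × ℕ+) →₀ ℕ) = 1 := by
  letI := McommMonoid hbr
  rw [P]
  simp
  exact pow_zero _

theorem P_add (e₁ e₂ : (Fin d × ℕ × ℕ+) →₀ ℕ) :
    P hbr (e₁ + e₂) = P hbr e₁ * P hbr e₂ := by
  letI := McommMonoid hbr
  rw [P, P, P, P_ext hbr (e₁ + e₂) (e₁.support ∪ e₂.support) Finsupp.support_add,
    P_ext hbr e₁ (e₁.support ∪ e₂.support) Finset.subset_union_left,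
    P_ext hbr e₂ (e₁.support ∪ e₂.support) Finset.subset_union_right]
  rw [← Submonoid.coe_mul]
  erw [← Finset.prod_mul_distrib]
  congr 1
  refine Finset.prod_congr rfl (fun u _ => ?_)
  rw [Finsupp.add_apply, pow_add]
  rfl

theorem P_single_one (v : Fin d × ℕ × ℕ+) :
    P hbr (Finsupp.single v 1) = B A v := by
  letI := McommMonoid hbr
  rw [P]
  rw [Finsupp.support_single_ne_zero v one_ne_zero]
  simp [Bm]

theorem comm_B_P (v : Fin d × ℕ × ℕ+) (e : (Fin d × ℕ × ℕ+) →₀ ℕ) :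
    Commute (B A v) (P hbr e) := by
  rw [P_eq_noncommProd]
  exact Finset.noncommProd_commute _ _ _ _ (fun x _ => (comm_BB hbr v x).pow_right _)

theorem P_add_single (e : (Fin d × ℕ × ℕ+) →₀ ℕ) (v : Fin d × ℕ × ℕ+) :
    P hbr (e + Finsupp.single v 1) = B A v * P hbr e := by
  rw [P_add, P_single_one]
  exact (comm_B_P hbr v e).symm.eq

theorem C_pow (v : Fin d × ℕ × ℕ+) (k : ℕ) :
    C A v * B A v ^ (k + 1)
      = B A v ^ (k + 1) * C A v
        + (((k + 1 : ℕ) : ℂ) * ((v.2.2 : ℕ) : ℂ) * l) • B A v ^ k := by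
  induction k with
  | zero =>
    simpa [mul_comm] using CB_self hbr v
  | succ k ih =>
    have step : C A v * B A v ^ (k + 2) = (C A v * B A v ^ (k + 1)) * B A v := by
      rw [mul_assoc, ← pow_succ]
    rw [step, ih, add_mul, smul_mul_assoc, mul_assoc, CB_self hbr v]
    rw [mul_add, ← mul_assoc, ← pow_succ]
    rw [mul_smul_comm, mul_one, ← pow_succ]
    push_cast
    match_scalars <;> ring

theorem C_P (v : Fin d × ℕ × ℕ+) :
    ∀ (n : ℕ) (e : (Fin d × ℕ × ℕ+) →₀ ℕ), e v = n →
    C A v * P hbr e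
      = P hbr e * C A v
        + (((e v : ℕ) : ℂ) * ((v.2.2 : ℕ) : ℂ) * l) • P hbr (e - Finsupp.single v 1) := by
  intro n
  induction n with
  | zero =>
    intro e he
    rw [he]
    have hcomm : Commute (C A v) (P hbr e) := by
      rw [P_eq_noncommProd]
      refine Finset.noncommProd_commute _ _ _ _ ?_
      intro x hx
      have hxv : v ≠ x := by
        rintro rfl
        exact (Finsupp.notMem_support_iff.mpr he) hx
      exact (comm_CB_ne hbr hxv).pow_right _
    rw [Nat.cast_zero, zero_mul, zero_mul, zero_smul, add_zero, hcomm.eq]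
  | succ k ih =>
    intro e he
    have h1 : 1 ≤ e v := by omega
    have hee : e - Finsupp.single v 1 + Finsupp.single v 1 = e := sub_single_add h1
    set e' := e - Finsupp.single v 1 with he'def
    have he' : e' v = k := by
      rw [he'def, Finsupp.tsub_apply, Finsupp.single_eq_same, he]
      omega
    have hPe : P hbr e = B A v * P hbr e' := by
      conv_lhs => rw [← hee]
      exact P_add_single hbr e' v
    rw [hPe, ← mul_assoc, CB_self hbr v, add_mul, mul_assoc, ih e' he', smul_mul_assoc,
      one_mul]
    rw [mul_add]
    rcases Nat.eq_zero_or_pos k with hk0 | hkpos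
    · rw [he', hk0, Nat.cast_zero, zero_mul, zero_mul, zero_smul, mul_zero, add_zero,
        ← mul_assoc, he, hk0]
      push_cast
      match_scalars <;> ring
    · have hB : B A v * P hbr (e' - Finsupp.single v 1) = P hbr e' := by
        conv_rhs => rw [← sub_single_add (show 1 ≤ e' v by omega)]
        exact (P_add_single hbr _ v).symm
      rw [mul_smul_comm, hB, ← mul_assoc, ← hPe, he, he']
      push_cast
      match_scalars <;> ring

variable {Om : Submodule ℂ W}

/-- structure map on the Finsupp model -/
noncomputable def Theta (Om : Submodule ℂ W) :
    (((Fin d × ℕ × ℕ+) →₀ ℕ) →₀ Om) →ₗ[ℂ] W :=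
  Finsupp.lsum ℂ (fun e => (P hbr e) ∘ₗ Om.subtype)

/-- partial-derivative operator on the Finsupp model -/
noncomputable def Dop (Om : Submodule ℂ W) (v : Fin d × ℕ × ℕ+) :
    (((Fin d × ℕ × ℕ+) →₀ ℕ) →₀ Om) →ₗ[ℂ] (((Fin d × ℕ × ℕ+) →₀ ℕ) →₀ Om) :=
  Finsupp.lsum ℂ (fun e => (Finsupp.lsingle (e - Finsupp.single v 1)) ∘ₗ
    (((e v : ℂ) • (LinearMap.id : Om →ₗ[ℂ] Om))))

theorem Theta_single (e : (Fin d × ℕ × ℕ+) →₀ ℕ) (m : Om) :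
    Theta hbr Om (Finsupp.single e m) = P hbr e (m : W) := by
  rw [Theta, Finsupp.lsum_single]
  rfl

omit hbr in
theorem Dop_single (v : Fin d × ℕ × ℕ+) (e : (Fin d × ℕ × ℕ+) →₀ ℕ) (m : Om) :
    Dop Om v (Finsupp.single e m)
      = Finsupp.single (e - Finsupp.single v 1) ((e v : ℂ) • m) := by
  rw [Dop, Finsupp.lsum_single]
  rfl

omit hbr in
theorem add_single_sub (e : (Fin d × ℕ × ℕ+) →₀ ℕ) (v : Fin d × ℕ × ℕ+) :
    e + Finsupp.single v 1 - Finsupp.single v 1 = e := by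
  ext u
  rw [Finsupp.tsub_apply, Finsupp.add_apply]
  omega

omit hbr in
theorem Dop_apply (v : Fin d × ℕ × ℕ+) (f : ((Fin d × ℕ × ℕ+) →₀ ℕ) →₀ Om)
    (e' : (Fin d × ℕ × ℕ+) →₀ ℕ) :
    Dop Om v f e' = ((e' v + 1 : ℕ) : ℂ) • f (e' + Finsupp.single v 1) := by
  classical
  have h1 : Dop Om v f = f.sum (fun e m =>
      Finsupp.single (e - Finsupp.single v 1) ((e v : ℂ) • m)) := by
    rw [Dop, Finsupp.lsum_apply]
    rfl
  rw [h1, Finsupp.sum_apply]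
  rw [Finsupp.sum]
  have h2 : ∀ e ∈ f.support,
      (Finsupp.single (e - Finsupp.single v 1) ((e v : ℂ) • f e)) e'
        = if e' + Finsupp.single v 1 = e then ((e' v + 1 : ℕ) : ℂ) • f e else 0 := by
    intro e _
    rw [Finsupp.single_apply]
    by_cases h : e' + Finsupp.single v 1 = e
    · rw [if_pos h]
      subst h
      rw [add_single_sub, if_pos rfl]
      have heq : ((e' + Finsupp.single v 1 : (Fin d × ℕ × ℕ+) →₀ ℕ) v) = e' v + 1 := by
        rw [Finsupp.add_apply, Finsupp.single_eq_same]
      rw [heq]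
    · rw [if_neg h]
      by_cases h2 : e - Finsupp.single v 1 = e'
      · have hev : e v = 0 := by
          by_contra hev
          apply h
          rw [← h2, sub_single_add (by omega)]
        rw [if_pos h2, hev, Nat.cast_zero, zero_smul]
      · rw [if_neg h2]
  rw [Finset.sum_congr rfl h2, Finset.sum_ite_eq f.support]
  by_cases hmem : e' + Finsupp.single v 1 ∈ f.support
  · rw [if_pos hmem]
  · rw [if_neg hmem, Finsupp.notMem_support_iff.mp hmem, smul_zero]

theorem C_Theta (hOm : ∀ w : W, w ∈ Om ↔ ∀ (i : Fin d) (j : ℕ) (k : ℤ), 0 < k → A i j k w = 0)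
    (v : Fin d × ℕ × ℕ+) (f : ((Fin d × ℕ × ℕ+) →₀ ℕ) →₀ Om) :
    C A v (Theta hbr Om f) = (((v.2.2 : ℕ) : ℂ) * l) • Theta hbr Om (Dop Om v f) := by
  have hmaps : (C A v) ∘ₗ (Theta hbr Om)
      = (((v.2.2 : ℕ) : ℂ) * l) • ((Theta hbr Om) ∘ₗ (Dop Om v)) := by
    refine Finsupp.lhom_ext (fun e m => ?_)
    simp only [LinearMap.comp_apply, LinearMap.smul_apply]
    rw [Theta_single, Dop_single, Theta_single]
    have hC : C A v (m : W) = 0 := by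
      refine (hOm (m : W)).mp m.2 v.1 v.2.1 ((v.2.2 : ℕ) : ℤ) ?_
      exact_mod_cast v.2.2.pos
    have h1 : C A v (P hbr e (m : W)) = (C A v * P hbr e) (m : W) := rfl
    rw [h1, C_P hbr v (e v) e rfl]
    simp only [LinearMap.add_apply, Module.End.mul_apply, LinearMap.smul_apply, hC, map_zero,
      zero_add]
    rw [Submodule.coe_smul, map_smul, smul_smul]
    congr 1
    ring
  have := LinearMap.congr_fun hmaps f
  simpa using this

omit hbr in
theorem esum_eq_zero {e : (Fin d × ℕ × ℕ+) →₀ ℕ} (h : (e.sum fun _ k => k) = 0) : e = 0 := by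
  ext u
  by_cases hu : u ∈ e.support
  · have := Finset.sum_eq_zero_iff.mp h u hu
    simpa using this
  · simpa using Finsupp.notMem_support_iff.mp hu

omit hbr in
theorem esum_sub_single {e : (Fin d × ℕ × ℕ+) →₀ ℕ} {v : Fin d × ℕ × ℕ+} (h : 1 ≤ e v) :
    ((e - Finsupp.single v 1).sum fun _ k => k) + 1 = e.sum fun _ k => k := by
  conv_rhs => rw [← sub_single_add h]
  rw [Finsupp.sum_add_index' (fun _ => rfl) (fun _ _ _ => rfl)]
  rw [Finsupp.sum_single_index rfl]

omit hbr in
theorem Dop_support (v : Fin d × ℕ × ℕ+) (f : ((Fin d × ℕ × ℕ+) →₀ ℕ) →₀ Om)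
    (e' : (Fin d × ℕ × ℕ+) →₀ ℕ) (he' : e' ∈ (Dop Om v f).support) :
    ∃ e ∈ f.support, 1 ≤ e v ∧ e' = e - Finsupp.single v 1 := by
  classical
  have h1 : Dop Om v f = f.sum (fun e m =>
      Finsupp.single (e - Finsupp.single v 1) ((e v : ℂ) • m)) := by
    rw [Dop, Finsupp.lsum_apply]
    rfl
  rw [h1] at he'
  have h2 := Finsupp.support_sum he'
  obtain ⟨e, he, hmem⟩ := Finset.mem_biUnion.mp h2
  refine ⟨e, he, ?_, ?_⟩
  · by_contra hev
    have : e v = 0 := by omega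
    rw [this] at hmem
    simp at hmem
  · exact Finset.mem_singleton.mp (Finsupp.support_single_subset hmem)

theorem Theta_inj_aux (hl : l ≠ 0)
    (hOm : ∀ w : W, w ∈ Om ↔ ∀ (i : Fin d) (j : ℕ) (k : ℤ), 0 < k → A i j k w = 0) :
    ∀ (n : ℕ) (f : ((Fin d × ℕ × ℕ+) →₀ ℕ) →₀ Om),
      (∀ e ∈ f.support, (e.sum fun _ k => k) ≤ n) → Theta hbr Om f = 0 → f = 0 := by
  have key : ∀ (f : ((Fin d × ℕ × ℕ+) →₀ ℕ) →₀ Om), Theta hbr Om f = 0 →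
      (∀ v, Dop Om v f = 0) → f = 0 := by
    intro f hf hD
    have hsupp : f.support ⊆ {0} := by
      intro e he
      rw [Finset.mem_singleton]
      by_contra hne
      obtain ⟨v, hv⟩ : ∃ v, e v ≠ 0 := by
        by_contra hall
        push_neg at hall
        exact hne (Finsupp.ext hall)
      have h1 := Dop_apply v f (e - Finsupp.single v 1)
      rw [hD v, sub_single_add (by omega), Finsupp.zero_apply] at h1
      have h2 : (((e - Finsupp.single v 1 : (Fin d × ℕ × ℕ+) →₀ ℕ)) v + 1 : ℕ) = e v := by
        rw [Finsupp.tsub_apply, Finsupp.single_eq_same]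
        omega
      rw [h2] at h1
      have h3 : f e = 0 := by
        have hnz : ((e v : ℕ) : ℂ) ≠ 0 := Nat.cast_ne_zero.mpr hv
        exact (smul_eq_zero.mp h1.symm).resolve_left hnz
      exact Finsupp.mem_support_iff.mp he h3
    have hf0 : f = Finsupp.single 0 (f 0) := by
      refine Finsupp.ext (fun e => ?_)
      by_cases he : e = 0
      · subst he; simp
      · rw [Finsupp.single_apply, if_neg (Ne.symm he)]
        have : e ∉ f.support := fun hc => he (Finset.mem_singleton.mp (hsupp hc))
        exact Finsupp.notMem_support_iff.mp this
    rw [hf0, Theta_single, P_zero] at hf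
    have : (f 0 : W) = 0 := by simpa using hf
    have : f 0 = 0 := Subtype.ext this
    rw [hf0, this, Finsupp.single_zero]
  intro n
  induction n with
  | zero =>
    intro f hdeg hf
    refine key f hf (fun v => ?_)
    have : f.support ⊆ {0} := by
      intro e he
      rw [Finset.mem_singleton]
      exact esum_eq_zero (Nat.le_zero.mp (hdeg e he))
    -- Dop of something supported at 0 is 0
    refine Finsupp.ext (fun e' => ?_)
    rw [Finsupp.zero_apply]
    by_cases h : e' ∈ (Dop Om v f).support
    · obtain ⟨e, he, hev, _⟩ := Dop_support v f e' h
      have h0 := Finset.mem_singleton.mp (this he)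
      rw [h0] at hev
      simp at hev
    · exact Finsupp.notMem_support_iff.mp h
  | succ n ih =>
    intro f hdeg hf
    refine key f hf (fun v => ?_)
    refine ih (Dop Om v f) ?_ ?_
    · intro e' he'
      obtain ⟨e, he, hev, rfl⟩ := Dop_support v f e' he'
      have h1 := esum_sub_single hev
      have h2 := hdeg e he
      omega
    · have h1 := C_Theta hbr hOm v f
      rw [hf, map_zero] at h1
      have h2 : Theta hbr Om (Dop Om v f) = 0 := by
        have hnz : (((v.2.2 : ℕ) : ℂ) * l) ≠ 0 := by
          refine mul_ne_zero ?_ hl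
          exact_mod_cast v.2.2.pos.ne'
        exact (smul_eq_zero.mp h1.symm).resolve_left hnz
      -- need Theta (Dop f) = 0 → apply injectivity at smaller degree: that's what we're doing
      exact h2

theorem Theta_inj (hl : l ≠ 0)
    (hOm : ∀ w : W, w ∈ Om ↔ ∀ (i : Fin d) (j : ℕ) (k : ℤ), 0 < k → A i j k w = 0)
    {f : ((Fin d × ℕ × ℕ+) →₀ ℕ) →₀ Om} (hf : Theta hbr Om f = 0) : f = 0 :=
  Theta_inj_aux hbr hl hOm (f.support.sup (fun e => e.sum fun _ k => k)) f
    (fun e he => Finset.le_sup (f := fun e => e.sum fun _ k => k) he) hf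

omit hbr in
theorem swap_sub_add {e : (Fin d × ℕ × ℕ+) →₀ ℕ} {u v : Fin d × ℕ × ℕ+} (huv : u ≠ v) :
    e - Finsupp.single u 1 + Finsupp.single v 1
      = e + Finsupp.single v 1 - Finsupp.single u 1 := by
  ext w
  simp only [Finsupp.add_apply, Finsupp.tsub_apply, Finsupp.single_apply]
  split_ifs with h1 h2 h2
  · exact absurd (h1.trans h2.symm) huv
  · omega
  · omega
  · omega

omit hbr in
theorem esum_add_single (e : (Fin d × ℕ × ℕ+) →₀ ℕ) (v : Fin d × ℕ × ℕ+) :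
    ((e + Finsupp.single v 1).sum fun _ k => k) = (e.sum fun _ k => k) + 1 := by
  rw [Finsupp.sum_add_index' (fun _ => rfl) (fun _ _ _ => rfl),
    Finsupp.sum_single_index rfl]

omit hbr in
theorem support_add_single (e : (Fin d × ℕ × ℕ+) →₀ ℕ) (v : Fin d × ℕ × ℕ+) :
    (e + Finsupp.single v 1).support = insert v e.support := by
  ext u
  simp only [Finsupp.mem_support_iff, Finsupp.add_apply, Finsupp.single_apply,
    Finset.mem_insert]
  by_cases h : v = u
  · subst h
    simp
  · rw [if_neg h, add_zero]
    constructor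
    · intro hu
      exact Or.inr hu
    · rintro (hu | hu)
      · exact absurd hu.symm h
      · exact hu

omit hbr in
theorem val_le_esum (e : (Fin d × ℕ × ℕ+) →₀ ℕ) (v : Fin d × ℕ × ℕ+) :
    e v ≤ e.sum fun _ k => k := by
  by_cases h : v ∈ e.support
  · exact Finset.single_le_sum (fun _ _ => Nat.zero_le _) h
  · rw [Finsupp.notMem_support_iff.mp h]
    exact Nat.zero_le _

omit hbr in
theorem erase_sum (e : (Fin d × ℕ × ℕ+) →₀ ℕ) (v : Fin d × ℕ × ℕ+) :
    ∑ u ∈ e.support.erase v, e u = (e.sum fun _ k => k) - e v := by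
  by_cases h : v ∈ e.support
  · have h1 : ∑ u ∈ e.support.erase v, e u + e v = ∑ u ∈ e.support, e u :=
      Finset.sum_erase_add _ _ h
    have h2 : (e.sum fun _ k => k) = ∑ u ∈ e.support, e u := rfl
    omega
  · rw [Finset.erase_eq_of_notMem h, Finsupp.notMem_support_iff.mp h]
    rfl

omit hbr in
theorem insert_erase_eq {α : Type*} [DecidableEq α] (v : α) (s : Finset α) :
    insert v (s.erase v) = insert v s := by
  ext u
  by_cases h : u = v <;> simp [h]

omit hbr in
theorem integrate (p : (Fin d × ℕ × ℕ+) → (((Fin d × ℕ × ℕ+) →₀ ℕ) →₀ Om))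
    (hfin : {v | p v ≠ 0}.Finite)
    (hcomp : ∀ v u, Dop Om v (p u) = Dop Om u (p v)) :
    ∃ f, ∀ v, Dop Om v f = p v := by
  classical
  set g : ((Fin d × ℕ × ℕ+) →₀ ℕ) → Om := fun e =>
    if e = 0 then 0
    else ((e.sum fun _ k => k : ℕ) : ℂ)⁻¹ •
      ∑ v ∈ e.support, (p v) (e - Finsupp.single v 1) with hg
  set Dset : Finset ((Fin d × ℕ × ℕ+) →₀ ℕ) :=
    hfin.toFinset.biUnion (fun v => (p v).support.image (· + Finsupp.single v 1)) with hDset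
  have hsupp : ∀ e, g e ≠ 0 → e ∈ Dset := by
    intro e hge
    have he0 : e ≠ 0 := by
      intro h
      rw [hg] at hge
      simp [h] at hge
    have hsum : ∑ v ∈ e.support, (p v) (e - Finsupp.single v 1) ≠ 0 := by
      intro h
      rw [hg] at hge
      simp [he0, h] at hge
    obtain ⟨v, hv, hpv⟩ := Finset.exists_ne_zero_of_sum_ne_zero hsum
    rw [hDset, Finset.mem_biUnion]
    refine ⟨v, ?_, ?_⟩
    · rw [Set.Finite.mem_toFinset]
      intro hc
      rw [hc] at hpv
      simp at hpv
    · rw [Finset.mem_image]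
      refine ⟨e - Finsupp.single v 1, Finsupp.mem_support_iff.mpr hpv, ?_⟩
      exact sub_single_add (by
        have := Finsupp.mem_support_iff.mp hv
        omega)
  refine ⟨Finsupp.onFinset Dset g hsupp, fun v => ?_⟩
  refine Finsupp.ext (fun e => ?_)
  rw [Dop_apply]
  rw [Finsupp.onFinset_apply]
  set E := e + Finsupp.single v 1 with hE
  have hE0 : E ≠ 0 := by
    intro h
    have := congrArg (fun q : (Fin d × ℕ × ℕ+) →₀ ℕ => q v) h
    simp only [hE, Finsupp.add_apply, Finsupp.single_eq_same, Finsupp.zero_apply] at this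
    omega
  have hgE : g E = (((e.sum fun _ k => k) + 1 : ℕ) : ℂ)⁻¹ •
      ∑ u ∈ insert v e.support, (p u) (E - Finsupp.single u 1) := by
    rw [hg]
    simp only [if_neg hE0]
    rw [esum_add_single, support_add_single]
  set c : ℂ := ((e v + 1 : ℕ) : ℂ) with hc
  have hcne : c ≠ 0 := by
    rw [hc]
    exact_mod_cast Nat.succ_ne_zero (e v)
  set x := (p v) e with hx
  have hterm : ∀ u ∈ e.support.erase v,
      (p u) (E - Finsupp.single u 1) = (c⁻¹ * (e u : ℂ)) • x := by
    intro u hu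
    have huv : u ≠ v := Finset.ne_of_mem_erase hu
    have heu : 1 ≤ e u := by
      have := Finsupp.mem_support_iff.mp (Finset.mem_of_mem_erase hu)
      omega
    have hcompu := DFunLike.congr_fun (hcomp v u) (e - Finsupp.single u 1)
    rw [Dop_apply, Dop_apply] at hcompu
    -- hcompu : ((e-δu) v + 1) • p u ((e-δu) + δv) = ((e-δu) u + 1) • p v ((e-δu) + δu)
    have h1 : ((e - Finsupp.single u 1 : (Fin d × ℕ × ℕ+) →₀ ℕ)) v = e v := by
      rw [Finsupp.tsub_apply, Finsupp.single_apply, if_neg huv, Nat.sub_zero]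
    have h2 : ((e - Finsupp.single u 1 : (Fin d × ℕ × ℕ+) →₀ ℕ)) u + 1 = e u := by
      rw [Finsupp.tsub_apply, Finsupp.single_eq_same]
      omega
    have h3 : e - Finsupp.single u 1 + Finsupp.single u 1 = e := sub_single_add heu
    have h4 : e - Finsupp.single u 1 + Finsupp.single v 1 = E - Finsupp.single u 1 := by
      rw [hE, swap_sub_add huv]
    rw [h1, h3, h4, h2] at hcompu
    -- hcompu : c • p u (E - δu) = (e u) • x
    calc (p u) (E - Finsupp.single u 1)
        = c⁻¹ • (c • (p u) (E - Finsupp.single u 1)) := by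
          rw [smul_smul, inv_mul_cancel₀ hcne, one_smul]
      _ = c⁻¹ • ((e u : ℂ) • x) := by rw [hc, hx, hcompu]
      _ = (c⁻¹ * (e u : ℂ)) • x := by rw [smul_smul]
  have hsplit : ∑ u ∈ insert v e.support, (p u) (E - Finsupp.single u 1)
      = x + ∑ u ∈ e.support.erase v, (p u) (E - Finsupp.single u 1) := by
    rw [← insert_erase_eq, Finset.sum_insert (Finset.notMem_erase _ _)]
    congr 1
    rw [hE, add_single_sub]
  have hsum2 : ∑ u ∈ e.support.erase v, (p u) (E - Finsupp.single u 1)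
      = (c⁻¹ * (((e.sum fun _ k => k) - e v : ℕ) : ℂ)) • x := by
    rw [Finset.sum_congr rfl hterm, ← Finset.sum_smul]
    congr 1
    rw [← Finset.mul_sum]
    congr 1
    rw [← Nat.cast_sum, erase_sum]
  rw [hgE, hsplit, hsum2]
  have hle := val_le_esum e v
  set N : ℕ := e.sum fun _ k => k with hN
  match_scalars
  have hNat : ((N - e v : ℕ) : ℂ) = ((N : ℕ) : ℂ) - ((e v : ℕ) : ℂ) := Nat.cast_sub hle
  rw [hNat, hc]
  have hc2 : ((e v : ℕ) : ℂ) + 1 ≠ 0 := by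
    exact_mod_cast (Nat.cast_ne_zero (R := ℂ)).mpr (Nat.succ_ne_zero (e v))
  have hN2 : ((N : ℕ) : ℂ) + 1 ≠ 0 := by
    exact_mod_cast (Nat.cast_ne_zero (R := ℂ)).mpr (Nat.succ_ne_zero N)
  push_cast
  field_simp
  ring

omit hbr in
theorem ann_finite {Wgr : ℤ → Submodule ℂ W} {N : ℤ}
    (hbddN : ∀ n < N, Wgr n = ⊥)
    (hgr : ∀ (i : Fin d) (j : ℕ) (m k : ℤ), ∀ w ∈ Wgr m, A i j k w ∈ Wgr (m - k))
    (hres : ∀ (w : W) (k : ℤ), 0 < k → ∀ i : Fin d, {j : ℕ | A i j k w ≠ 0}.Finite)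
    {m : ℤ} {w : W} (hw : w ∈ Wgr m) :
    {v : Fin d × ℕ × ℕ+ | C A v w ≠ 0}.Finite := by
  classical
  set K : ℕ := (m - N).toNat with hK
  have hsub : {v : Fin d × ℕ × ℕ+ | C A v w ≠ 0} ⊆
      ⋃ (i : Fin d), ⋃ (n ∈ {n : ℕ+ | (n : ℕ) ≤ K}),
        (fun j => (i, j, n)) '' {j : ℕ | A i j ((n : ℕ) : ℤ) w ≠ 0} := by
    rintro ⟨i, j, n⟩ hv
    have hne : A i j ((n : ℕ) : ℤ) w ≠ 0 := hv
    have hnK : (n : ℕ) ≤ K := by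
      by_contra hcon
      apply hne
      have hmem := hgr i j m ((n : ℕ) : ℤ) w hw
      have hlow : m - ((n : ℕ) : ℤ) < N := by
        have := n.pos
        omega
      rw [hbddN _ hlow] at hmem
      simpa using hmem
    simp only [Set.mem_iUnion]
    exact ⟨i, n, hnK, ⟨j, hne, rfl⟩⟩
  refine Set.Finite.subset ?_ hsub
  refine Set.finite_iUnion (fun i => ?_)
  refine Set.Finite.biUnion ?_ (fun n _ => ?_)
  · have : {n : ℕ+ | (n : ℕ) ≤ K} = ((↑) : ℕ+ → ℕ) ⁻¹' (Set.Iic K) := rfl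
    rw [this]
    exact Set.Finite.preimage (Function.Injective.injOn PNat.coe_injective)
      (Set.finite_Iic K)
  · exact Set.Finite.image _ (hres w ((n : ℕ) : ℤ) (by exact_mod_cast n.pos) i)

theorem theta_surj (hl : l ≠ 0)
    (hOm : ∀ w : W, w ∈ Om ↔ ∀ (i : Fin d) (j : ℕ) (k : ℤ), 0 < k → A i j k w = 0)
    {Wgr : ℤ → Submodule ℂ W}
    (hspan : (⨆ n, Wgr n) = ⊤)
    (hgr : ∀ (i : Fin d) (j : ℕ) (m k : ℤ), ∀ w ∈ Wgr m, A i j k w ∈ Wgr (m - k))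
    (hres : ∀ (w : W) (k : ℤ), 0 < k → ∀ i : Fin d, {j : ℕ | A i j k w ≠ 0}.Finite)
    (hbdd : ∃ N : ℤ, ∀ n < N, Wgr n = ⊥) :
    ∀ w : W, w ∈ LinearMap.range (Theta hbr Om) := by
  classical
  obtain ⟨N, hN⟩ := hbdd
  have main : ∀ (k : ℕ) (mZ : ℤ), mZ ≤ N + k →
      Wgr mZ ≤ LinearMap.range (Theta hbr Om) := by
    intro k
    induction k using Nat.strong_induction_on with
    | _ k ih =>
      intro mZ hmZ w hw
      by_cases hm : mZ < N
      · rw [hN mZ hm] at hw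
        rw [Submodule.mem_bot] at hw
        rw [hw]
        exact zero_mem _
      push_neg at hm
      -- all annihilators of w lie in the range
      have hCw : ∀ v : Fin d × ℕ × ℕ+, C A v w ∈ LinearMap.range (Theta hbr Om) := by
        intro v
        have hmem : A v.1 v.2.1 ((v.2.2 : ℕ) : ℤ) w ∈ Wgr (mZ - ((v.2.2 : ℕ) : ℤ)) :=
          hgr v.1 v.2.1 mZ ((v.2.2 : ℕ) : ℤ) w hw
        by_cases hzero : mZ - ((v.2.2 : ℕ) : ℤ) < N
        · rw [hN _ hzero, Submodule.mem_bot] at hmem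
          show A v.1 v.2.1 ((v.2.2 : ℕ) : ℤ) w ∈ _
          rw [hmem]
          exact zero_mem _
        · push_neg at hzero
          have hk1 : 1 ≤ k := by
            have := v.2.2.pos
            omega
          refine ih (k - 1) (by omega) (mZ - ((v.2.2 : ℕ) : ℤ)) (by
            have := v.2.2.pos
            omega) hmem
      -- finitely many nonzero annihilators
      have hfin := ann_finite hN hgr hres hw
      -- choose preimages
      have hex : ∀ v : Fin d × ℕ × ℕ+, ∃ fq, Theta hbr Om fq = C A v w :=
        fun v => LinearMap.mem_range.mp (hCw v)
      choose q hq using hex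
      set p : (Fin d × ℕ × ℕ+) → (((Fin d × ℕ × ℕ+) →₀ ℕ) →₀ Om) :=
        fun v => ((((v.2.2 : ℕ) : ℂ) * l)⁻¹ • q v) with hp
      have hcv : ∀ v : Fin d × ℕ × ℕ+, (((v.2.2 : ℕ) : ℂ) * l) ≠ 0 := by
        intro v
        refine mul_ne_zero ?_ hl
        exact_mod_cast v.2.2.pos.ne'
      have hpfin : {v | p v ≠ 0}.Finite := by
        refine Set.Finite.subset hfin (fun v hv => ?_)
        by_contra hc
        apply hv
        rw [hp]
        simp only [Set.mem_setOf_eq, not_not] at hc ⊢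
        have hq0 : Theta hbr Om (q v) = 0 := by
          rw [hq v, hc]
        rw [Theta_inj hbr hl hOm hq0, smul_zero]
      have hDcomp : ∀ v u, Dop Om v (p u) = Dop Om u (p v) := by
        intro v u
        have hCC : C A v (C A u w) = C A u (C A v w) := by
          have h1 : C A v (C A u w) = (C A v * C A u) w := rfl
          have h2 : C A u (C A v w) = (C A u * C A v) w := rfl
          rw [h1, h2, (comm_CC hbr v u).eq]
        rw [← hq u, ← hq v] at hCC
        rw [C_Theta hbr hOm v (q u), C_Theta hbr hOm u (q v)] at hCC
        set cv := (((v.2.2 : ℕ) : ℂ) * l)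
        set cu := (((u.2.2 : ℕ) : ℂ) * l)
        have hd : Theta hbr Om (cv • Dop Om v (q u) - cu • Dop Om u (q v)) = 0 := by
          rw [map_sub, map_smul, map_smul, hCC, sub_self]
        have hd2 := Theta_inj hbr hl hOm hd
        have hd3 : cv • Dop Om v (q u) = cu • Dop Om u (q v) := by
          have := sub_eq_zero.mp hd2
          exact this
        rw [hp]
        simp only [map_smul]
        have h4 : (cu⁻¹ * cv⁻¹) • (cv • Dop Om v (q u))
            = (cu⁻¹ * cv⁻¹) • (cu • Dop Om u (q v)) := by rw [hd3]
        rw [smul_smul, smul_smul] at h4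
        have hcu := hcv u
        have hcvne := hcv v
        have e1 : cu⁻¹ * cv⁻¹ * cv = cu⁻¹ := by rw [mul_assoc, inv_mul_cancel₀ (show cv ≠ 0 from hcvne), mul_one]
        have e2 : cu⁻¹ * cv⁻¹ * cu = cv⁻¹ := by rw [mul_right_comm, inv_mul_cancel₀ (show cu ≠ 0 from hcu), one_mul]
        rw [e1, e2] at h4
        exact h4
      obtain ⟨f, hf⟩ := integrate p hpfin hDcomp
      have hw' : w - Theta hbr Om f ∈ Om := by
        rw [hOm]
        intro i j kk hk
        set v : Fin d × ℕ × ℕ+ := (i, j, ⟨kk.toNat, by omega⟩) with hv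
        have hkk : ((kk.toNat : ℕ) : ℤ) = kk := Int.toNat_of_nonneg hk.le
        have hCA : C A v = A i j kk := congrArg (A i j) hkk
        rw [← hCA, map_sub, C_Theta hbr hOm v f, hf v]
        have hpv : p v = ((((v.2.2 : ℕ) : ℂ) * l)⁻¹ • q v) := rfl
        rw [hpv, map_smul, smul_smul, mul_inv_cancel₀ (hcv v), one_smul, hq v, sub_self]
      refine LinearMap.mem_range.mpr
        ⟨Finsupp.single 0 ⟨w - Theta hbr Om f, hw'⟩ + f, ?_⟩
      rw [map_add, Theta_single, P_zero]
      simp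
  intro w
  have hw : w ∈ (⨆ n, Wgr n) := by rw [hspan]; trivial
  refine Submodule.iSup_induction Wgr (motive := fun x => x ∈ LinearMap.range (Theta hbr Om))
    hw ?_ (zero_mem _) (fun _ _ => add_mem) 
  intro n x hx
  refine main (n - N).toNat n (by omega) hx

end comm

end St4

/-- Theorem 4.2: let `W` be a complex vector space with operators `A i j k`
(`i ∈ Fin d`, `j ∈ ℕ`, `k ∈ ℤ`) and an internal direct sum decomposition `W = ⊕_{n∈ℤ} Wgr n`
satisfying the grading, level-`l` commutation, restrictedness and lower-truncation conditions
(i)–(iv) of a restricted ℤ-graded level-`l` module for the affinization of the abelian current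
algebra.  Let `Om = Ω(W)` be the vacuum space.  Then any ℂ-linear map
`Φ : MvPolynomial (Fin d × ℕ × ℕ+) ℂ ⊗[ℂ] Ω(W) → W` sending each `X^e ⊗ w` to
`(∏_{(i,j,n) ∈ supp e} A i j (-n)^{e (i,j,n)}) w` (the operators pairwise commute by (ii))
is a linear isomorphism; i.e. `W ≅ M(l) ⊗ Ω(W)`. -/
theorem statement4 (d : ℕ) (hd : 0 < d) (l : ℂ) (hl : l ≠ 0)
    (W : Type*) [AddCommGroup W] [Module ℂ W]
    (A : Fin d → ℕ → ℤ → Module.End ℂ W)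
    (Wgr : ℤ → Submodule ℂ W)
    (hindep : iSupIndep Wgr)
    (hspan : (⨆ n, Wgr n) = ⊤)
    (hgr : ∀ (i : Fin d) (j : ℕ) (m k : ℤ), ∀ w ∈ Wgr m, A i j k w ∈ Wgr (m - k))
    (hbr : ∀ (i : Fin d) (j : ℕ) (m : ℤ) (i' : Fin d) (j' : ℕ) (n : ℤ),
      A i j m * A i' j' n - A i' j' n * A i j m
        = ((m : ℂ) * l * (if m + n = 0 then 1 else 0)
            * (if (i, j) = (i', j') then 1 else 0)) • 1)
    (hres : ∀ (w : W) (k : ℤ), 0 < k → ∀ i : Fin d, {j : ℕ | A i j k w ≠ 0}.Finite)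
    (hbdd : ∃ N : ℤ, ∀ n < N, Wgr n = ⊥)
    (Om : Submodule ℂ W)
    (hOm : ∀ w : W, w ∈ Om ↔ ∀ (i : Fin d) (j : ℕ) (k : ℤ), 0 < k → A i j k w = 0)
    (Φ : (MvPolynomial (Fin d × ℕ × ℕ+) ℂ) ⊗[ℂ] Om →ₗ[ℂ] W)
    (hΦ : ∀ (e : (Fin d × ℕ × ℕ+) →₀ ℕ) (w : Om),
      Φ ((MvPolynomial.monomial e 1) ⊗ₜ[ℂ] (w : Om))
        = (e.support.noncommProd
            (fun v => (A v.1 v.2.1 (-((v.2.2 : ℕ) : ℤ))) ^ (e v))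
            (fun x _ y _ _ => Commute.pow_pow (by
              have h := hbr x.1 x.2.1 (-((x.2.2 : ℕ) : ℤ)) y.1 y.2.1 (-((y.2.2 : ℕ) : ℤ))
              have hz : (-((x.2.2 : ℕ) : ℤ)) + (-((y.2.2 : ℕ) : ℤ)) ≠ 0 := by
                have hx1 := x.2.2.pos
                have hy1 := y.2.2.pos
                omega
              rw [if_neg hz] at h
              have h0 : A x.1 x.2.1 (-((x.2.2 : ℕ) : ℤ)) * A y.1 y.2.1 (-((y.2.2 : ℕ) : ℤ))
                  - A y.1 y.2.1 (-((y.2.2 : ℕ) : ℤ)) * A x.1 x.2.1 (-((x.2.2 : ℕ) : ℤ)) = 0 := by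
                rw [h]
                simp
              exact sub_eq_zero.mp h0) _ _)) (w : W)) :
    Function.Bijective Φ := by
  classical
  -- the map from the Finsupp model into the tensor product
  let L : (((Fin d × ℕ × ℕ+) →₀ ℕ) →₀ Om) →ₗ[ℂ]
      ((MvPolynomial (Fin d × ℕ × ℕ+) ℂ) ⊗[ℂ] Om) :=
    Finsupp.lsum ℂ (fun e =>
      (TensorProduct.mk ℂ (MvPolynomial (Fin d × ℕ × ℕ+) ℂ) Om)
        (MvPolynomial.monomial e 1))
  have hLs : ∀ (e : (Fin d × ℕ × ℕ+) →₀ ℕ) (m : Om),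
      L (Finsupp.single e m) = (MvPolynomial.monomial e 1) ⊗ₜ[ℂ] m := by
    intro e m
    simp [L]
  have hLth : Φ.comp L = St4.Theta hbr Om := by
    refine Finsupp.lhom_ext (fun e m => ?_)
    rw [LinearMap.comp_apply, hLs, St4.Theta_single, St4.P_eq_noncommProd]
    exact hΦ e m
  have hLsurj : Function.Surjective L := by
    rw [← LinearMap.range_eq_top, ← top_le_iff, ← TensorProduct.span_tmul_eq_top ℂ,
      Submodule.span_le]
    rintro t ⟨pp, mm, rfl⟩
    refine LinearMap.mem_range.mpr
      ⟨pp.support.sum (fun e => Finsupp.single e ((MvPolynomial.coeff e pp) • mm)), ?_⟩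
    rw [map_sum]
    conv_rhs => rw [pp.as_sum]
    rw [TensorProduct.sum_tmul]
    refine Finset.sum_congr rfl (fun e he => ?_)
    rw [hLs]
    rw [show (MvPolynomial.monomial e) (MvPolynomial.coeff e pp)
        = (MvPolynomial.coeff e pp) • (MvPolynomial.monomial e) 1 by
      rw [MvPolynomial.smul_monomial, smul_eq_mul, mul_one]]
    rw [TensorProduct.smul_tmul]
  constructor
  · intro a b hab
    obtain ⟨fa, rfl⟩ := hLsurj a
    obtain ⟨fb, rfl⟩ := hLsurj b
    have h0 : St4.Theta hbr Om (fa - fb) = 0 := by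
      rw [← hLth, LinearMap.comp_apply, map_sub, map_sub, hab, sub_self]
    have h1 := St4.Theta_inj hbr hl hOm h0
    rw [sub_eq_zero] at h1
    rw [h1]
  · intro w
    obtain ⟨f, hf⟩ := LinearMap.mem_range.mp
      (St4.theta_surj hbr hl hOm hspan hgr hres hbdd w)
    refine ⟨L f, ?_⟩
    rw [← hf, ← hLth, LinearMap.comp_apply]
end
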